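/- Fix n ≥ 1, positive reals aᵢ, bᵢ, ξᵢ for i ∈ {1,…,n}, and P > 0. Suppose λ > 0 and z ∈ ℝⁿ satisfy zᵢ = max(0, √(aᵢ bᵢ/(ξᵢ λ)) − bᵢ) for every i, and ∑ᵢ ξᵢ zᵢ = P. Then z minimizes the objective ∑_{i=1}^n aᵢ bᵢ/(wᵢ + bᵢ) over the feasible set {w ∈ ℝⁿ : wᵢ ≥ 0 for all i and ∑ᵢ ξᵢ wᵢ ≤ P}; that is, for every such w, ∑ᵢ aᵢ bᵢ/(zᵢ + bᵢ) ≤ ∑ᵢ aᵢ bᵢ/(wᵢ + bᵢ). -/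

import Mathlib

open Finset

lemma wf_key (a b ξ lam w : ℝ) (ha : 0 < a) (hb : 0 < b) (hξ : 0 < ξ)
    (hlam : 0 < lam) (hw : 0 ≤ w) :
    a * b / (max 0 (Real.sqrt (a * b / (ξ * lam)) - b) + b)
      + lam * ξ * max 0 (Real.sqrt (a * b / (ξ * lam)) - b)
      ≤ a * b / (w + b) + lam * ξ * w := by
  set s := Real.sqrt (a * b / (ξ * lam)) with hs_def
  have hq : 0 < a * b / (ξ * lam) := by positivity
  have hs2 : s ^ 2 = a * b / (ξ * lam) := Real.sq_sqrt hq.le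
  have hspos : 0 < s := Real.sqrt_pos.mpr hq
  have hkey : lam * ξ * s ^ 2 = a * b := by
    rw [hs2]; field_simp
  have hwb : 0 < w + b := by linarith
  rcases le_or_gt s b with h | h
  · have hmax : max 0 (s - b) = 0 := max_eq_left (by linarith)
    rw [hmax]
    have h1 : a * b / (0 + b) = a := by field_simp; ring
    rw [h1, mul_zero, add_zero, ← sub_nonneg]
    have hrw : a * b / (w + b) + lam * ξ * w - a
        = (a * b + lam * ξ * w * (w + b) - a * (w + b)) / (w + b) := by
      field_simp
    rw [hrw]
    apply div_nonneg _ hwb.le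
    have hs2b : s ^ 2 ≤ b ^ 2 := by nlinarith
    have hlb : a * b ≤ lam * ξ * b ^ 2 :=
      hkey ▸ mul_le_mul_of_nonneg_left hs2b (by positivity)
    nlinarith [mul_nonneg (mul_nonneg (mul_nonneg hlam.le hξ.le) hw) hw,
      mul_le_mul_of_nonneg_right hlb hw]
  · have hmax : max 0 (s - b) = s - b := max_eq_right (by linarith)
    rw [hmax]
    have h1 : s - b + b = s := by ring
    rw [h1]
    have hab : a * b = lam * ξ * s ^ 2 := hkey.symm
    rw [hab, ← sub_nonneg]
    have hrw : lam * ξ * s ^ 2 / (w + b) + lam * ξ * w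
        - (lam * ξ * s ^ 2 / s + lam * ξ * (s - b))
        = lam * ξ * (s - (w + b)) ^ 2 / (w + b) := by
      field_simp; ring
    rw [hrw]
    positivity

/-- water-filling, Scenario A: if `λ > 0` and
`zᵢ = max(0, √(aᵢbᵢ/(ξᵢλ)) − bᵢ)` for all `i` with `∑ᵢ ξᵢ zᵢ = P`, then `z`
minimizes `∑ᵢ aᵢbᵢ/(wᵢ + bᵢ)` over `{w : wᵢ ≥ 0, ∑ᵢ ξᵢ wᵢ ≤ P}`. -/
theorem stmt_5 (n : ℕ) (hn : 1 ≤ n) (a b ξ : Fin n → ℝ) (P : ℝ) (hP : 0 < P)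
    (ha : ∀ i, 0 < a i) (hb : ∀ i, 0 < b i) (hξ : ∀ i, 0 < ξ i)
    (lam : ℝ) (hlam : 0 < lam) (z : Fin n → ℝ)
    (hz : ∀ i, z i = max 0 (Real.sqrt (a i * b i / (ξ i * lam)) - b i))
    (hsum : ∑ i, ξ i * z i = P) :
    ∀ w : Fin n → ℝ, (∀ i, 0 ≤ w i) → ∑ i, ξ i * w i ≤ P →
      ∑ i, a i * b i / (z i + b i) ≤ ∑ i, a i * b i / (w i + b i) := by
  intro w hw hwP
  have key : ∀ i, a i * b i / (z i + b i) + lam * ξ i * z i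
      ≤ a i * b i / (w i + b i) + lam * ξ i * w i := by
    intro i
    rw [hz i]
    exact wf_key _ _ _ _ _ (ha i) (hb i) (hξ i) hlam (hw i)
  have hsum_le : ∑ i, (a i * b i / (z i + b i) + lam * ξ i * z i)
      ≤ ∑ i, (a i * b i / (w i + b i) + lam * ξ i * w i) :=
    Finset.sum_le_sum fun i _ => key i
  rw [Finset.sum_add_distrib, Finset.sum_add_distrib] at hsum_le
  have h1 : ∑ i, lam * ξ i * z i = lam * P := by
    rw [← hsum, Finset.mul_sum]; congr 1; ext i; ring
  have h2 : ∑ i, lam * ξ i * w i ≤ lam * P := by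
    calc ∑ i, lam * ξ i * w i = lam * ∑ i, ξ i * w i := by
          rw [Finset.mul_sum]; congr 1; ext i; ring
      _ ≤ lam * P := mul_le_mul_of_nonneg_left hwP hlam.le
  linarith
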